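/- In the polynomial ring ℝ[xᵢ,yᵢ,pᵢ,qᵢ : i = 1,…,4] (16 variables), the eight polynomials ζ₁₂, ζ₁₃, ζ₁₄, ζ₂₃, ζ₂₄, ζ₃₄, τ := Δ₁₂₃·δ₁₂₃ and σ := δ₁₂₃δ₁₂₄δ₁₃₄δ₂₃₄·Δ₁₂₃Δ₁₂₄Δ₁₃₄Δ₂₃₄ are algebraically independent over ℝ. -/

import Mathlib

set_option maxHeartbeats 1600000
set_option maxRecDepth 8000


open MvPolynomial

/-- The gradient line of the `i`-th point, with polynomial entries: the variables
`(i,0), (i,1), (i,2), (i,3)` are `xᵢ, yᵢ, pᵢ, qᵢ` respectively. -/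
noncomputable def glP {n : ℕ} (i : Fin n) : Fin 3 → MvPolynomial (Fin n × Fin 4) ℝ :=
  ![X (i, 2), X (i, 3), -(X (i, 2) * X (i, 0)) - X (i, 3) * X (i, 1)]

/-- The joint invariant `ζᵢⱼ = (pᵢ(xᵢ−xⱼ)+qᵢ(yᵢ−yⱼ))·(pⱼ(xᵢ−xⱼ)+qⱼ(yᵢ−yⱼ))` as a polynomial. -/
noncomputable def zetaP {n : ℕ} (i j : Fin n) : MvPolynomial (Fin n × Fin 4) ℝ :=
  (X (i, 2) * (X (i, 0) - X (j, 0)) + X (i, 3) * (X (i, 1) - X (j, 1))) *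
    (X (j, 2) * (X (i, 0) - X (j, 0)) + X (j, 3) * (X (i, 1) - X (j, 1)))

/-- `Δᵢⱼₖ = det(ℓᵢ, ℓⱼ, ℓₖ)`, determinant of the matrix with rows the gradient lines. -/
noncomputable def DeltaP {n : ℕ} (i j k : Fin n) : MvPolynomial (Fin n × Fin 4) ℝ :=
  Matrix.det (Matrix.of ![glP i, glP j, glP k])

/-- `δᵢⱼₖ = det(Aᵢ, Aⱼ, Aₖ)`, with columns `Aᵢ = (xᵢ, yᵢ, 1)ᵀ`. -/
noncomputable def deltaP {n : ℕ} (i j k : Fin n) : MvPolynomial (Fin n × Fin 4) ℝ :=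
  Matrix.det (Matrix.of
    ![![X (i, 0), X (j, 0), X (k, 0)], ![X (i, 1), X (j, 1), X (k, 1)], ![1, 1, 1]])


namespace FourPt

variable {σ : Type*} [DecidableEq σ]

lemma coeff_pderiv (i : σ) (m : σ →₀ ℕ) (p : MvPolynomial σ ℝ) :
    coeff m (pderiv i p) = ((m i : ℝ) + 1) * coeff (m + Finsupp.single i 1) p := by
  induction p using MvPolynomial.induction_on' with
  | add p q hp hq => simp [hp, hq, mul_add]
  | monomial s a =>
    rw [pderiv_monomial, coeff_monomial, coeff_monomial]
    by_cases h : s = m + Finsupp.single i 1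
    · subst h
      rw [if_pos (by simp), if_pos rfl]
      simp only [Finsupp.add_apply, Finsupp.single_eq_same]
      push_cast
      ring
    · rw [if_neg h, mul_zero]
      by_cases h2 : s - Finsupp.single i 1 = m
      · rw [if_pos h2]
        have hsi : s i = 0 := by
          by_contra hsi
          apply h
          have hs : s = (s - Finsupp.single i 1) + Finsupp.single i 1 := by
            ext b
            by_cases hb : b = i
            · subst hb
              simp only [Finsupp.add_apply, Finsupp.tsub_apply, Finsupp.single_eq_same]
              omega
            · simp [Finsupp.single_apply, Ne.symm hb, hb]
          rw [hs, h2]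
        simp [hsi]
      · rw [if_neg h2]

lemma totalDegree_pderiv_le (i : σ) (p : MvPolynomial σ ℝ) {n : ℕ}
    (h : p.totalDegree ≤ n + 1) : (pderiv i p).totalDegree ≤ n := by
  apply Finset.sup_le
  intro m hm
  have hc : coeff m (pderiv i p) ≠ 0 := mem_support_iff.mp hm
  rw [coeff_pderiv] at hc
  have h2 : coeff (m + Finsupp.single i 1) p ≠ 0 := by
    intro h0; exact hc (by rw [h0, mul_zero])
  have h3 := le_totalDegree (p := p) (mem_support_iff.mpr h2)
  have h4 : ((m + Finsupp.single i 1).sum fun _ e => e) =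
      (m.sum fun _ e => e) + 1 := by
    rw [Finsupp.sum_add_index' (fun _ => rfl) (fun _ _ _ => rfl), Finsupp.sum_single_index rfl]
  omega

lemma eq_C_of_pderiv_eq_zero (p : MvPolynomial σ ℝ) (h : ∀ i, pderiv i p = 0) :
    p = C (coeff 0 p) := by
  ext m
  by_cases hm : m = 0
  · subst hm; simp
  · rw [coeff_C, if_neg (Ne.symm hm)]
    have : ∃ i, m i ≠ 0 := by
      by_contra h'
      push_neg at h'
      exact hm (by ext i; simp [h' i])
    obtain ⟨i, hi⟩ := this
    have h0 := congrArg (coeff (m - Finsupp.single i 1)) (h i)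
    rw [coeff_pderiv, coeff_zero] at h0
    have hm' : (m - Finsupp.single i 1) + Finsupp.single i 1 = m := by
      ext b
      by_cases hb : b = i
      · subst hb
        simp only [Finsupp.add_apply, Finsupp.tsub_apply, Finsupp.single_eq_same]
        omega
      · simp [Finsupp.single_apply, Ne.symm hb, hb]
    rw [hm'] at h0
    rcases mul_eq_zero.mp h0 with h1 | h1
    · exact absurd h1 (Nat.cast_add_one_ne_zero _)
    · exact h1

lemma pderiv_aeval (g : Fin 8 → MvPolynomial σ ℝ) (i : σ) (P : MvPolynomial (Fin 8) ℝ) :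
    pderiv i (aeval g P) = ∑ j, aeval g (pderiv j P) * pderiv i (g j) := by
  induction P using MvPolynomial.induction_on with
  | C a => simp
  | add p q hp hq =>
    simp only [map_add, hp, hq, ← Finset.sum_add_distrib, add_mul]
  | mul_X p j hp =>
    rw [map_mul, aeval_X, pderiv_mul, hp]
    have key : ∀ k : Fin 8, aeval g (pderiv k (p * X j)) * pderiv i (g k)
        = (aeval g (pderiv k p) * pderiv i (g k)) * g j
          + aeval g p * (aeval g (pderiv k (X j : MvPolynomial (Fin 8) ℝ)) * pderiv i (g k)) := by
      intro k
      simp only [pderiv_mul, map_add, map_mul, aeval_X]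
      ring
    rw [Finset.sum_congr rfl fun k _ => key k, Finset.sum_add_distrib,
      ← Finset.sum_mul, ← Finset.mul_sum]
    have h2 : (∑ k : Fin 8, aeval g (pderiv k (X j : MvPolynomial (Fin 8) ℝ)) * pderiv i (g k))
        = pderiv i (g j) := by
      rw [Finset.sum_eq_single j]
      · simp
      · intro k _ hk
        rw [pderiv_X_of_ne (Ne.symm hk)]
        simp
      · simp
    rw [h2]

lemma algindep_of_jac (g : Fin 8 → MvPolynomial (Fin 8) ℝ)
    (H : (Matrix.of fun i j => pderiv i (g j)).det ≠ 0) :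
    AlgebraicIndependent ℝ g := by
  rw [algebraicIndependent_iff]
  suffices H2 : ∀ (n : ℕ) (p : MvPolynomial (Fin 8) ℝ),
      p.totalDegree ≤ n → aeval g p = 0 → p = 0 by
    intro p hp; exact H2 p.totalDegree p le_rfl hp
  intro n
  induction n with
  | zero =>
    intro p h0 hp
    have hC : p = C (coeff 0 p) := by
      ext m
      by_cases hm : m = 0
      · subst hm; simp
      · rw [coeff_C, if_neg (Ne.symm hm)]
        by_contra hc
        have hmem : m ∈ p.support := mem_support_iff.mpr hc
        have := ((totalDegree_eq_zero_iff _ p).mp (Nat.le_zero.mp h0)) m hmem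
        exact hm (by ext i; simp [this i])
    rw [hC] at hp ⊢
    rw [aeval_C, MvPolynomial.algebraMap_eq, C_eq_zero] at hp
    rw [hp, map_zero]
  | succ n ih =>
    intro p hdeg hp
    set M : Matrix (Fin 8) (Fin 8) (MvPolynomial (Fin 8) ℝ) :=
      Matrix.of fun i j => pderiv i (g j) with hMdef
    have hMv : M.mulVec (fun j => aeval g (pderiv j p)) = 0 := by
      funext i
      have h1 := pderiv_aeval g i p
      rw [hp, map_zero] at h1
      simp only [Matrix.mulVec, dotProduct, hMdef, Matrix.of_apply, Pi.zero_apply]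
      rw [show ∑ x, pderiv i (g x) * aeval g (pderiv x p)
          = ∑ x, aeval g (pderiv x p) * pderiv i (g x) from
        Finset.sum_congr rfl fun k _ => mul_comm _ _]
      exact h1.symm
    have hv : ∀ j, aeval g (pderiv j p) = 0 := by
      intro j
      have h2 : M.det • (fun j => aeval g (pderiv j p))
          = (0 : Fin 8 → MvPolynomial (Fin 8) ℝ) := by
        have h3 := congrArg (fun w => (Matrix.adjugate M).mulVec w) hMv
        simpa [Matrix.mulVec_mulVec, Matrix.adjugate_mul, Matrix.smul_mulVec,
          Matrix.one_mulVec] using h3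
      have h4 := congrFun h2 j
      simp only [Pi.smul_apply, smul_eq_mul, Pi.zero_apply] at h4
      rcases mul_eq_zero.mp h4 with h5 | h5
      · exact absurd h5 H
      · exact h5
    have hpd : ∀ j, pderiv j p = 0 := by
      intro j
      exact ih (pderiv j p) (totalDegree_pderiv_le j p hdeg) (hv j)
    have hC := eq_C_of_pderiv_eq_zero p hpd
    rw [hC] at hp ⊢
    rw [aeval_C, MvPolynomial.algebraMap_eq, C_eq_zero] at hp
    rw [hp, map_zero]


noncomputable def D1 : MvPolynomial (Fin 8) ℝ :=
  X 1*X 2*X 5 - X 1*X 2*X 4 - X 0*X 3*X 5 + X 0*X 2*X 5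
noncomputable def D2 : MvPolynomial (Fin 8) ℝ :=
  X 1*X 2*X 7 - X 0*X 3*X 7 - X 0*X 3*X 6 + X 0*X 2*X 7
noncomputable def D3 : MvPolynomial (Fin 8) ℝ :=
  -(X 1*X 5*X 6) + X 1*X 4*X 7 + X 1*X 4*X 6 - X 0*X 5*X 6
noncomputable def D4 : MvPolynomial (Fin 8) ℝ :=
  -(X 3*X 5*X 6) + X 3*X 4*X 7 + X 3*X 4*X 6 - X 2*X 4*X 7

noncomputable def G : Fin 8 → MvPolynomial (Fin 8) ℝ :=
  ![X 0 * X 2, X 1 * X 5, (X 0 + X 1) * (X 6 + X 7), (X 2 - X 3) * (X 4 - X 5),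
    X 3 * X 7, X 4 * X 6, D1, D1 * D2 * D3 * D4]

noncomputable def sb : Fin 4 × Fin 4 → MvPolynomial (Fin 8) ℝ := fun v =>
  (![![0, 0, X 0, X 1], ![1, 0, X 2, X 3], ![0, 1, X 4, X 5], ![1, 1, X 6, X 7]]) v.1 v.2

def pt : Fin 8 → ℝ := fun i => if i = 5 then 2 else 1

noncomputable def d1 : Fin 8 → ℝ := fun i => (if i = 0 then 0 else if i = 1 then 1 else if i = 2 then 3 else if i = 3 then -2 else if i = 4 then -1 else if i = 5 then 1 else if i = 6 then 0 else 0)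
noncomputable def d2 : Fin 8 → ℝ := fun i => (if i = 0 then -1 else if i = 1 then 1 else if i = 2 then 2 else if i = 3 then -2 else if i = 4 then 0 else if i = 5 then 0 else if i = 6 then -1 else 1)
noncomputable def d3 : Fin 8 → ℝ := fun i => (if i = 0 then -2 else if i = 1 then 0 else if i = 2 then 0 else if i = 3 then 0 else if i = 4 then 2 else if i = 5 then -2 else if i = 6 then -3 else 1)
noncomputable def d4 : Fin 8 → ℝ := fun i => (if i = 0 then 0 else if i = 1 then 0 else if i = 2 then -1 else if i = 3 then 0 else if i = 4 then 1 else if i = 5 then -1 else if i = 6 then -1 else 0)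
noncomputable def M0 : Matrix (Fin 8) (Fin 8) ℝ := Matrix.of fun i j =>
  (if i = 0 then 
    (if j = 0 then 1 else if j = 1 then 0 else if j = 2 then 2 else if j = 3 then 0 else if j = 4 then 0 else if j = 5 then 0 else if j = 6 then 0 else -2) else if i = 1 then 
    (if j = 0 then 0 else if j = 1 then 2 else if j = 2 then 2 else if j = 3 then 0 else if j = 4 then 0 else if j = 5 then 0 else if j = 6 then 1 else 2) else if i = 2 then 
    (if j = 0 then 1 else if j = 1 then 0 else if j = 2 then 0 else if j = 3 then -1 else if j = 4 then 0 else if j = 5 then 0 else if j = 6 then 3 else 4) else if i = 3 then 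
    (if j = 0 then 0 else if j = 1 then 0 else if j = 2 then 0 else if j = 3 then 1 else if j = 4 then 1 else if j = 5 then 0 else if j = 6 then -2 else -4) else if i = 4 then 
    (if j = 0 then 0 else if j = 1 then 0 else if j = 2 then 0 else if j = 3 then 0 else if j = 4 then 0 else if j = 5 then 1 else if j = 6 then -1 else 0) else if i = 5 then 
    (if j = 0 then 0 else if j = 1 then 1 else if j = 2 then 0 else if j = 3 then 0 else if j = 4 then 0 else if j = 5 then 0 else if j = 6 then 1 else 0) else if i = 6 then 
    (if j = 0 then 0 else if j = 1 then 0 else if j = 2 then 2 else if j = 3 then 0 else if j = 4 then 0 else if j = 5 then 1 else if j = 6 then 0 else -2) else 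
    (if j = 0 then 0 else if j = 1 then 0 else if j = 2 then 2 else if j = 3 then 0 else if j = 4 then 1 else if j = 5 then 0 else if j = 6 then 0 else 2))
noncomputable def N0 : Matrix (Fin 8) (Fin 8) ℝ := Matrix.of fun i j =>
  (if i = 0 then 
    (if j = 0 then 0 else if j = 1 then 1 else if j = 2 then 1 else if j = 3 then 1 else if j = 4 then 0 else if j = 5 then -2 else if j = 6 then 0 else -1) else if i = 1 then 
    (if j = 0 then 1 else if j = 1 then -1 else if j = 2 then -1 else if j = 3 then -1 else if j = 4 then 1 else if j = 5 then 3 else if j = 6 then -1 else 1) else if i = 2 then 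
    (if j = 0 then 0 else if j = 1 then (1/4) else if j = 2 then 0 else if j = 3 then 0 else if j = 4 then (-1/4) else if j = 5 then (-1/2) else if j = 6 then (1/4) else 0) else if i = 3 then 
    (if j = 0 then -5 else if j = 1 then 7 else if j = 2 then 5 else if j = 3 then 6 else if j = 4 then -4 else if j = 5 then -14 else if j = 6 then 4 else -6) else if i = 4 then 
    (if j = 0 then 1 else if j = 1 then -2 else if j = 2 then -1 else if j = 3 then -1 else if j = 4 then 1 else if j = 5 then 4 else if j = 6 then -1 else 2) else if i = 5 then 
    (if j = 0 then -1 else if j = 1 then 1 else if j = 2 then 1 else if j = 3 then 1 else if j = 4 then 0 else if j = 5 then -2 else if j = 6 then 1 else -1) else if i = 6 then 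
    (if j = 0 then -1 else if j = 1 then 1 else if j = 2 then 1 else if j = 3 then 1 else if j = 4 then -1 else if j = 5 then -2 else if j = 6 then 1 else -1) else 
    (if j = 0 then (-1/2) else if j = 1 then (3/4) else if j = 2 then (1/2) else if j = 3 then (1/2) else if j = 4 then (-1/4) else if j = 5 then (-3/2) else if j = 6 then (1/4) else (-1/2)))

lemma hD1e : eval pt D1 = 1 := by simp [D1, pt] <;> norm_num
lemma hD2e : eval pt D2 = 0 := by simp [D2, pt] <;> norm_num
lemma hD3e : eval pt D3 = -2 := by simp [D3, pt] <;> norm_num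
lemma hD4e : eval pt D4 = -1 := by simp [D4, pt] <;> norm_num

lemma hD1d : ∀ i, eval pt (pderiv i D1) = d1 i := by
  intro i; fin_cases i <;> simp [D1, d1, pt, pderiv_mul, Pi.single_apply] <;> norm_num
lemma hD2d : ∀ i, eval pt (pderiv i D2) = d2 i := by
  intro i; fin_cases i <;> simp [D2, d2, pt, pderiv_mul, Pi.single_apply] <;> norm_num
lemma hD3d : ∀ i, eval pt (pderiv i D3) = d3 i := by
  intro i; fin_cases i <;> simp [D3, d3, pt, pderiv_mul, Pi.single_apply] <;> norm_num
lemma hD4d : ∀ i, eval pt (pderiv i D4) = d4 i := by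
  intro i; fin_cases i <;> simp [D4, d4, pt, pderiv_mul, Pi.single_apply] <;> norm_num

lemma col0 : ∀ i, eval pt (pderiv i (G 0)) = M0 i 0 := by
  intro i; rw [show G 0 = X 0 * X 2 from rfl]
  fin_cases i <;> simp [pt, M0, pderiv_mul, Pi.single_apply] <;> norm_num
lemma col1 : ∀ i, eval pt (pderiv i (G 1)) = M0 i 1 := by
  intro i; rw [show G 1 = X 1 * X 5 from rfl]
  fin_cases i <;> simp [pt, M0, pderiv_mul, Pi.single_apply] <;> norm_num
lemma col2 : ∀ i, eval pt (pderiv i (G 2)) = M0 i 2 := by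
  intro i; rw [show G 2 = (X 0 + X 1) * (X 6 + X 7) from rfl]
  fin_cases i <;> simp [pt, M0, pderiv_mul, Pi.single_apply] <;> norm_num
lemma col3 : ∀ i, eval pt (pderiv i (G 3)) = M0 i 3 := by
  intro i; rw [show G 3 = (X 2 - X 3) * (X 4 - X 5) from rfl]
  fin_cases i <;> simp [pt, M0, pderiv_mul, Pi.single_apply] <;> norm_num
lemma col4 : ∀ i, eval pt (pderiv i (G 4)) = M0 i 4 := by
  intro i; rw [show G 4 = X 3 * X 7 from rfl]
  fin_cases i <;> simp [pt, M0, pderiv_mul, Pi.single_apply] <;> norm_num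
lemma col5 : ∀ i, eval pt (pderiv i (G 5)) = M0 i 5 := by
  intro i; rw [show G 5 = X 4 * X 6 from rfl]
  fin_cases i <;> simp [pt, M0, pderiv_mul, Pi.single_apply] <;> norm_num
lemma col6 : ∀ i, eval pt (pderiv i (G 6)) = M0 i 6 := by
  intro i; rw [show G 6 = D1 from rfl, hD1d i]
  fin_cases i <;> simp [d1, M0] <;> norm_num
lemma col7 : ∀ i, eval pt (pderiv i (G 7)) = M0 i 7 := by
  intro i; rw [show G 7 = D1 * D2 * D3 * D4 from rfl]
  simp only [pderiv_mul, map_add, map_mul, hD1e, hD2e, hD3e, hD4e, hD1d, hD2d, hD3d, hD4d]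
  fin_cases i <;> simp [d1, d2, d3, d4, M0] <;> norm_num

lemma hM : (Matrix.of fun i j => pderiv i (G j)).map (eval pt) = M0 := by
  ext i j
  fin_cases j
  · exact col0 i
  · exact col1 i
  · exact col2 i
  · exact col3 i
  · exact col4 i
  · exact col5 i
  · exact col6 i
  · exact col7 i

lemma hM0N : M0 * N0 = 1 := by
  ext i j
  rw [Matrix.mul_apply, Fin.sum_univ_eight]
  fin_cases i <;> fin_cases j <;>
    simp [M0, N0, Matrix.one_apply] <;> norm_num

lemma hM0det : M0.det ≠ 0 :=
  Matrix.det_ne_zero_of_right_inverse hM0N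

lemma hdet : (Matrix.of fun i j => pderiv i (G j)).det ≠ 0 := by
  intro h
  apply hM0det
  rw [← hM, ← RingHom.mapMatrix_apply, ← RingHom.map_det, h, map_zero]

lemma hGind : AlgebraicIndependent ℝ G := algindep_of_jac G hdet

lemma hsd012 : aeval sb (deltaP (0 : Fin 4) 1 2) = 1 := by
  simp [deltaP, Matrix.det_fin_three, sb, Matrix.cons_val_zero, Matrix.cons_val_one,
    Matrix.head_cons, Matrix.cons_val_two, Matrix.cons_val_three, Matrix.vecTail,
    Matrix.vecHead] <;> ring
lemma hsd013 : aeval sb (deltaP (0 : Fin 4) 1 3) = 1 := by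
  simp [deltaP, Matrix.det_fin_three, sb, Matrix.cons_val_zero, Matrix.cons_val_one,
    Matrix.head_cons, Matrix.cons_val_two, Matrix.cons_val_three, Matrix.vecTail,
    Matrix.vecHead] <;> ring
lemma hsd023 : aeval sb (deltaP (0 : Fin 4) 2 3) = -1 := by
  simp [deltaP, Matrix.det_fin_three, sb, Matrix.cons_val_zero, Matrix.cons_val_one,
    Matrix.head_cons, Matrix.cons_val_two, Matrix.cons_val_three, Matrix.vecTail,
    Matrix.vecHead] <;> ring
lemma hsd123 : aeval sb (deltaP (1 : Fin 4) 2 3) = -1 := by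
  simp [deltaP, Matrix.det_fin_three, sb, Matrix.cons_val_zero, Matrix.cons_val_one,
    Matrix.head_cons, Matrix.cons_val_two, Matrix.cons_val_three, Matrix.vecTail,
    Matrix.vecHead] <;> ring
lemma hsD012 : aeval sb (DeltaP (0 : Fin 4) 1 2) = D1 := by
  simp [DeltaP, glP, D1, Matrix.det_fin_three, sb, Matrix.cons_val_zero, Matrix.cons_val_one,
    Matrix.head_cons, Matrix.cons_val_two, Matrix.cons_val_three, Matrix.vecTail,
    Matrix.vecHead] <;> ring
lemma hsD013 : aeval sb (DeltaP (0 : Fin 4) 1 3) = D2 := by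
  simp [DeltaP, glP, D2, Matrix.det_fin_three, sb, Matrix.cons_val_zero, Matrix.cons_val_one,
    Matrix.head_cons, Matrix.cons_val_two, Matrix.cons_val_three, Matrix.vecTail,
    Matrix.vecHead] <;> ring
lemma hsD023 : aeval sb (DeltaP (0 : Fin 4) 2 3) = D3 := by
  simp [DeltaP, glP, D3, Matrix.det_fin_three, sb, Matrix.cons_val_zero, Matrix.cons_val_one,
    Matrix.head_cons, Matrix.cons_val_two, Matrix.cons_val_three, Matrix.vecTail,
    Matrix.vecHead] <;> ring
lemma hsD123 : aeval sb (DeltaP (1 : Fin 4) 2 3) = D4 := by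
  simp [DeltaP, glP, D4, Matrix.det_fin_three, sb, Matrix.cons_val_zero, Matrix.cons_val_one,
    Matrix.head_cons, Matrix.cons_val_two, Matrix.cons_val_three, Matrix.vecTail,
    Matrix.vecHead] <;> ring

end FourPt

/-- For four points, the invariants `ζᵢⱼ (i<j), τ, σ` are algebraically independent. -/
theorem four_point_invariants_algebraically_independent :
    AlgebraicIndependent ℝ
      (![zetaP (0 : Fin 4) 1,
        zetaP (0 : Fin 4) 2,
        zetaP (0 : Fin 4) 3,
        zetaP (1 : Fin 4) 2,
        zetaP (1 : Fin 4) 3,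
        zetaP (2 : Fin 4) 3,
        DeltaP (0 : Fin 4) 1 2 * deltaP (0 : Fin 4) 1 2,
        deltaP (0 : Fin 4) 1 2 *
          deltaP (0 : Fin 4) 1 3 *
          deltaP (0 : Fin 4) 2 3 *
          deltaP (1 : Fin 4) 2 3 *
          DeltaP (0 : Fin 4) 1 2 *
          DeltaP (0 : Fin 4) 1 3 *
          DeltaP (0 : Fin 4) 2 3 *
          DeltaP (1 : Fin 4) 2 3] :
        Fin 8 → MvPolynomial (Fin 4 × Fin 4) ℝ) := by
  classical
  apply AlgebraicIndependent.of_comp (aeval FourPt.sb)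
  have hcomp : ⇑(aeval FourPt.sb) ∘
      (![zetaP (0 : Fin 4) 1,
        zetaP (0 : Fin 4) 2,
        zetaP (0 : Fin 4) 3,
        zetaP (1 : Fin 4) 2,
        zetaP (1 : Fin 4) 3,
        zetaP (2 : Fin 4) 3,
        DeltaP (0 : Fin 4) 1 2 * deltaP (0 : Fin 4) 1 2,
        deltaP (0 : Fin 4) 1 2 *
          deltaP (0 : Fin 4) 1 3 *
          deltaP (0 : Fin 4) 2 3 *
          deltaP (1 : Fin 4) 2 3 *
          DeltaP (0 : Fin 4) 1 2 *
          DeltaP (0 : Fin 4) 1 3 *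
          DeltaP (0 : Fin 4) 2 3 *
          DeltaP (1 : Fin 4) 2 3] :
        Fin 8 → MvPolynomial (Fin 4 × Fin 4) ℝ) = FourPt.G := by
    funext k
    fin_cases k
    · show aeval FourPt.sb (zetaP (0 : Fin 4) 1) = X 0 * X 2
      simp [zetaP, FourPt.sb, Matrix.cons_val_zero, Matrix.cons_val_one, Matrix.head_cons,
        Matrix.cons_val_two, Matrix.cons_val_three, Matrix.vecTail, Matrix.vecHead] <;> ring
    · show aeval FourPt.sb (zetaP (0 : Fin 4) 2) = X 1 * X 5
      simp [zetaP, FourPt.sb, Matrix.cons_val_zero, Matrix.cons_val_one, Matrix.head_cons,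
        Matrix.cons_val_two, Matrix.cons_val_three, Matrix.vecTail, Matrix.vecHead] <;> ring
    · show aeval FourPt.sb (zetaP (0 : Fin 4) 3) = (X 0 + X 1) * (X 6 + X 7)
      simp [zetaP, FourPt.sb, Matrix.cons_val_zero, Matrix.cons_val_one, Matrix.head_cons,
        Matrix.cons_val_two, Matrix.cons_val_three, Matrix.vecTail, Matrix.vecHead] <;> ring
    · show aeval FourPt.sb (zetaP (1 : Fin 4) 2) = (X 2 - X 3) * (X 4 - X 5)
      simp [zetaP, FourPt.sb, Matrix.cons_val_zero, Matrix.cons_val_one, Matrix.head_cons,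
        Matrix.cons_val_two, Matrix.cons_val_three, Matrix.vecTail, Matrix.vecHead] <;> ring
    · show aeval FourPt.sb (zetaP (1 : Fin 4) 3) = X 3 * X 7
      simp [zetaP, FourPt.sb, Matrix.cons_val_zero, Matrix.cons_val_one, Matrix.head_cons,
        Matrix.cons_val_two, Matrix.cons_val_three, Matrix.vecTail, Matrix.vecHead] <;> ring
    · show aeval FourPt.sb (zetaP (2 : Fin 4) 3) = X 4 * X 6
      simp [zetaP, FourPt.sb, Matrix.cons_val_zero, Matrix.cons_val_one, Matrix.head_cons,
        Matrix.cons_val_two, Matrix.cons_val_three, Matrix.vecTail, Matrix.vecHead] <;> ring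
    · show aeval FourPt.sb (DeltaP (0 : Fin 4) 1 2 * deltaP (0 : Fin 4) 1 2) = FourPt.D1
      rw [map_mul, FourPt.hsD012, FourPt.hsd012, mul_one]
    · show aeval FourPt.sb
          (deltaP (0 : Fin 4) 1 2 * deltaP (0 : Fin 4) 1 3 * deltaP (0 : Fin 4) 2 3 *
            deltaP (1 : Fin 4) 2 3 * DeltaP (0 : Fin 4) 1 2 * DeltaP (0 : Fin 4) 1 3 *
            DeltaP (0 : Fin 4) 2 3 * DeltaP (1 : Fin 4) 2 3)
          = FourPt.D1 * FourPt.D2 * FourPt.D3 * FourPt.D4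
      rw [map_mul, map_mul, map_mul, map_mul, map_mul, map_mul, map_mul,
        FourPt.hsd012, FourPt.hsd013, FourPt.hsd023, FourPt.hsd123,
        FourPt.hsD012, FourPt.hsD013, FourPt.hsD023, FourPt.hsD123]
      ring
  rw [hcomp]
  exact FourPt.hGind
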